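/- For real numbers l, a, b with 0 < b < l ≤ a, the intersection probability P(l,a,b) equals (1/π)·(b/a) + (2/π)·(l/b)·(1 − √(1 − b²/l²)) + (2/π)·(π/2 − arcsin(b/l)). -/

import Mathlib

open Real MeasureTheory Filter

/-- `A(l,a) = ∫_0^π min(a, l·|cos φ|) dφ` -/
noncomputable def A2 (l a : ℝ) : ℝ := ∫ φ in (0:ℝ)..π, min a (l * |Real.cos φ|)

/-- `B(l,b) = ∫_0^π min(b, l·sin φ) dφ` -/
noncomputable def B2 (l b : ℝ) : ℝ := ∫ φ in (0:ℝ)..π, min b (l * Real.sin φ)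

/-- `AB(l,a,b) = ∫_0^π min(a, l·|cos φ|)·min(b, l·sin φ) dφ` -/
noncomputable def AB2 (l a b : ℝ) : ℝ :=
  ∫ φ in (0:ℝ)..π, min a (l * |Real.cos φ|) * min b (l * Real.sin φ)

/-- Intersection probability for the 2D Buffon–Laplace needle problem. -/
noncomputable def P2 (l a b : ℝ) : ℝ :=
  (b * A2 l a + a * B2 l b - AB2 l a b) / (π * a * b)

/-- Intersection probability for the 2D spherocylinder Buffon–Laplace problem. -/
noncomputable def P2sc (l σ a b : ℝ) : ℝ :=
  ((b - σ) * A2 l (a - σ) + (a - σ) * B2 l (b - σ) - AB2 l (a - σ) (b - σ)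
    + (σ * a + σ * b - σ ^ 2) * π) / (π * a * b)

/-- `A³ᴰ(l,a) = ∫_0^{π/2} ∫_0^π min(a, l·sin ψ·|cos φ|) dφ dψ` -/
noncomputable def A3 (l a : ℝ) : ℝ :=
  ∫ ψ in (0:ℝ)..(π/2), ∫ φ in (0:ℝ)..π, min a (l * Real.sin ψ * |Real.cos φ|)

/-- `B³ᴰ(l,b) = ∫_0^{π/2} ∫_0^π min(b, l·sin ψ·sin φ) dφ dψ` -/
noncomputable def B3 (l b : ℝ) : ℝ :=
  ∫ ψ in (0:ℝ)..(π/2), ∫ φ in (0:ℝ)..π, min b (l * Real.sin ψ * Real.sin φ)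

/-- `AB³ᴰ(l,a,b) = ∫_0^{π/2} ∫_0^π min(a, l·sin ψ·|cos φ|)·min(b, l·sin ψ·sin φ) dφ dψ` -/
noncomputable def AB3 (l a b : ℝ) : ℝ :=
  ∫ ψ in (0:ℝ)..(π/2), ∫ φ in (0:ℝ)..π,
    min a (l * Real.sin ψ * |Real.cos φ|) * min b (l * Real.sin ψ * Real.sin φ)

/-- `S³ᴰ(l,a,b) = b·A³ᴰ(l,a) + a·B³ᴰ(l,b) − AB³ᴰ(l,a,b)` -/
noncomputable def S3 (l a b : ℝ) : ℝ := b * A3 l a + a * B3 l b - AB3 l a b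

/-- `F(α,β,t) = ∫_α^β √(sin²ψ − t²) dψ` -/
noncomputable def Faux (α β t : ℝ) : ℝ :=
  ∫ ψ in α..β, Real.sqrt (Real.sin ψ ^ 2 - t ^ 2)

/-- `G(α,β,t) = ∫_α^β (π/2 − arcsin(t / sin ψ)) dψ` -/
noncomputable def Gaux (α β t : ℝ) : ℝ :=
  ∫ ψ in α..β, (π / 2 - Real.arcsin (t / Real.sin ψ))

lemma integral_sin_mul_cos' (α β : ℝ) :
    ∫ φ in α..β, Real.sin φ * Real.cos φ
      = Real.sin β ^ 2 / 2 - Real.sin α ^ 2 / 2 := by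
  have hderiv : ∀ x ∈ Set.uIcc α β, HasDerivAt (fun t => Real.sin t ^ 2 / 2)
      (Real.sin x * Real.cos x) x := by
    intro x _
    have h : HasDerivAt (fun t => Real.sin t ^ 2 / 2)
        (((2 : ℕ) : ℝ) * Real.sin x ^ (2 - 1) * Real.cos x / 2) x :=
      ((Real.hasDerivAt_sin x).pow 2).div_const 2
    convert h using 1
    norm_num
    ring
  rw [intervalIntegral.integral_eq_sub_of_hasDerivAt hderiv
    (Continuous.intervalIntegrable (by continuity) _ _)]

lemma A2_eq {l a : ℝ} (hl : 0 < l) (hla : l ≤ a) : A2 l a = 2 * l := by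
  have hmin : ∀ φ, min a (l * |Real.cos φ|) = l * |Real.cos φ| := by
    intro φ
    refine min_eq_right ?_
    have h1 : |Real.cos φ| ≤ 1 := Real.abs_cos_le_one φ
    nlinarith [abs_nonneg (Real.cos φ)]
  have h1 : A2 l a = ∫ φ in (0:ℝ)..π, l * |Real.cos φ| := by
    unfold A2; simp only [hmin]
  have hi1 : IntervalIntegrable (fun φ : ℝ => l * |Real.cos φ|) volume 0 (π/2) :=
    Continuous.intervalIntegrable (by continuity) _ _
  have hi2 : IntervalIntegrable (fun φ : ℝ => l * |Real.cos φ|) volume (π/2) π :=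
    Continuous.intervalIntegrable (by continuity) _ _
  rw [h1, ← intervalIntegral.integral_add_adjacent_intervals hi1 hi2]
  have e1 : ∫ φ in (0:ℝ)..(π/2), l * |Real.cos φ| = ∫ φ in (0:ℝ)..(π/2), l * Real.cos φ := by
    apply intervalIntegral.integral_congr
    intro φ hφ
    rw [Set.uIcc_of_le (by positivity)] at hφ
    obtain ⟨h1, h2⟩ := hφ
    show l * |Real.cos φ| = l * Real.cos φ
    rw [abs_of_nonneg (Real.cos_nonneg_of_mem_Icc ⟨by linarith, h2⟩)]
  have e2 : ∫ φ in (π/2:ℝ)..π, l * |Real.cos φ| = ∫ φ in (π/2:ℝ)..π, l * (-Real.cos φ) := by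
    apply intervalIntegral.integral_congr
    intro φ hφ
    rw [Set.uIcc_of_le (by linarith [Real.pi_pos])] at hφ
    obtain ⟨h1, h2⟩ := hφ
    show l * |Real.cos φ| = l * -Real.cos φ
    rw [abs_of_nonpos (Real.cos_nonpos_of_pi_div_two_le_of_le h1 (by linarith [Real.pi_pos]))]
  rw [e1, e2]
  simp [integral_cos, intervalIntegral.integral_const_mul, mul_comm]
  ring

lemma sin_arcsin' {b l : ℝ} (hb : 0 < b) (hbl : b < l) :
    Real.sin (Real.arcsin (b / l)) = b / l := by
  have hl : 0 < l := hb.trans hbl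
  have h0 : 0 < b / l := div_pos hb hl
  exact Real.sin_arcsin (by linarith) (le_of_lt ((div_lt_one hl).mpr hbl))

lemma B2_eq {l b : ℝ} (hb : 0 < b) (hbl : b < l) :
    B2 l b = 2 * l * (1 - Real.sqrt (1 - b ^ 2 / l ^ 2))
      + b * (π - 2 * Real.arcsin (b / l)) := by
  have hl : 0 < l := hb.trans hbl
  set θ := Real.arcsin (b / l) with hθdef
  have ht0 : 0 < b / l := by positivity
  have ht1 : b / l < 1 := (div_lt_one hl).mpr hbl
  have hθ0 : 0 < θ := Real.arcsin_pos.mpr ht0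
  have hθ2 : θ < π / 2 := Real.arcsin_lt_pi_div_two.mpr ht1
  have hsθ : Real.sin θ = b / l := sin_arcsin' hb hbl
  have hcθ : Real.cos θ = Real.sqrt (1 - b ^ 2 / l ^ 2) := by
    rw [hθdef, Real.cos_arcsin, div_pow]
  have hπ : (0:ℝ) < π := Real.pi_pos
  -- monotonicity facts
  have key1 : ∀ φ ∈ Set.Icc (0:ℝ) θ, min b (l * Real.sin φ) = l * Real.sin φ := by
    intro φ ⟨h1, h2⟩
    refine min_eq_right ?_
    have : Real.sin φ ≤ Real.sin θ :=
      Real.strictMonoOn_sin.monotoneOn ⟨by linarith, by linarith⟩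
        ⟨by linarith, by linarith⟩ h2
    rw [hsθ] at this
    calc l * Real.sin φ ≤ l * (b / l) := by nlinarith
    _ = b := by field_simp
  have key2 : ∀ φ ∈ Set.Icc θ (π - θ), min b (l * Real.sin φ) = b := by
    intro φ ⟨h1, h2⟩
    refine min_eq_left ?_
    have hsin : Real.sin θ ≤ Real.sin φ := by
      rcases le_total φ (π / 2) with h | h
      · exact Real.strictMonoOn_sin.monotoneOn ⟨by linarith, by linarith⟩
          ⟨by linarith, by linarith⟩ h1
      · rw [← Real.sin_pi_sub φ]
        exact Real.strictMonoOn_sin.monotoneOn ⟨by linarith, by linarith⟩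
          ⟨by linarith, by linarith⟩ (by linarith)
    rw [hsθ] at hsin
    calc b = l * (b / l) := by field_simp
    _ ≤ l * Real.sin φ := by nlinarith
  have key3 : ∀ φ ∈ Set.Icc (π - θ) π, min b (l * Real.sin φ) = l * Real.sin φ := by
    intro φ ⟨h1, h2⟩
    refine min_eq_right ?_
    have : Real.sin φ ≤ Real.sin θ := by
      rw [← Real.sin_pi_sub φ]
      exact Real.strictMonoOn_sin.monotoneOn ⟨by linarith, by linarith⟩
        ⟨by linarith, by linarith⟩ (by linarith)
    rw [hsθ] at this
    calc l * Real.sin φ ≤ l * (b / l) := by nlinarith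
    _ = b := by field_simp
  have hi : ∀ u v : ℝ, IntervalIntegrable (fun φ : ℝ => min b (l * Real.sin φ)) volume u v :=
    fun u v => Continuous.intervalIntegrable (continuous_const.min (continuous_const.mul Real.continuous_sin)) _ _
  have hsplit : B2 l b = (∫ φ in (0:ℝ)..θ, min b (l * Real.sin φ))
      + (∫ φ in θ..(π - θ), min b (l * Real.sin φ))
      + (∫ φ in (π - θ)..π, min b (l * Real.sin φ)) := by
    unfold B2
    rw [← intervalIntegral.integral_add_adjacent_intervals (hi 0 θ) (hi θ π)]
    rw [← intervalIntegral.integral_add_adjacent_intervals (hi θ (π - θ)) (hi (π - θ) π)]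
    ring
  have e1 : ∫ φ in (0:ℝ)..θ, min b (l * Real.sin φ) = l * (1 - Real.cos θ) := by
    rw [intervalIntegral.integral_congr (g := fun φ => l * Real.sin φ) ?_]
    · rw [intervalIntegral.integral_const_mul, integral_sin]
      simp
    · intro φ hφ
      rw [Set.uIcc_of_le hθ0.le] at hφ
      exact key1 φ hφ
  have e2 : ∫ φ in θ..(π - θ), min b (l * Real.sin φ) = b * (π - 2 * θ) := by
    rw [intervalIntegral.integral_congr (g := fun _ => b) ?_]
    · simp
      ring
    · intro φ hφ
      rw [Set.uIcc_of_le (by linarith)] at hφ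
      exact key2 φ hφ
  have e3 : ∫ φ in (π - θ)..π, min b (l * Real.sin φ) = l * (1 - Real.cos θ) := by
    rw [intervalIntegral.integral_congr (g := fun φ => l * Real.sin φ) ?_]
    · rw [intervalIntegral.integral_const_mul, integral_sin]
      rw [Real.cos_pi_sub, Real.cos_pi]
      ring
    · intro φ hφ
      rw [Set.uIcc_of_le (by linarith)] at hφ
      exact key3 φ hφ
  rw [hsplit, e1, e2, e3, hcθ]
  ring

lemma AB2_eq {l a b : ℝ} (hb : 0 < b) (hbl : b < l) (hla : l ≤ a) :
    AB2 l a b = 2 * b * l - b ^ 2 := by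
  have hl : 0 < l := hb.trans hbl
  set θ := Real.arcsin (b / l) with hθdef
  have ht0 : 0 < b / l := by positivity
  have ht1 : b / l < 1 := (div_lt_one hl).mpr hbl
  have hθ0 : 0 < θ := Real.arcsin_pos.mpr ht0
  have hθ2 : θ < π / 2 := Real.arcsin_lt_pi_div_two.mpr ht1
  have hsθ : Real.sin θ = b / l := sin_arcsin' hb hbl
  have hπ : (0:ℝ) < π := Real.pi_pos
  have hmina : ∀ φ : ℝ, min a (l * |Real.cos φ|) = l * |Real.cos φ| := by
    intro φ
    refine min_eq_right ?_
    have h1 : |Real.cos φ| ≤ 1 := Real.abs_cos_le_one φ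
    nlinarith [abs_nonneg (Real.cos φ)]
  have keyb1 : ∀ φ ∈ Set.Icc (0:ℝ) θ, min b (l * Real.sin φ) = l * Real.sin φ := by
    intro φ ⟨h1, h2⟩
    refine min_eq_right ?_
    have : Real.sin φ ≤ Real.sin θ :=
      Real.strictMonoOn_sin.monotoneOn ⟨by linarith, by linarith⟩
        ⟨by linarith, by linarith⟩ h2
    rw [hsθ] at this
    calc l * Real.sin φ ≤ l * (b / l) := by nlinarith
    _ = b := by field_simp
  have keyb2 : ∀ φ ∈ Set.Icc θ (π - θ), min b (l * Real.sin φ) = b := by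
    intro φ ⟨h1, h2⟩
    refine min_eq_left ?_
    have hsin : Real.sin θ ≤ Real.sin φ := by
      rcases le_total φ (π / 2) with h | h
      · exact Real.strictMonoOn_sin.monotoneOn ⟨by linarith, by linarith⟩
          ⟨by linarith, by linarith⟩ h1
      · rw [← Real.sin_pi_sub φ]
        exact Real.strictMonoOn_sin.monotoneOn ⟨by linarith, by linarith⟩
          ⟨by linarith, by linarith⟩ (by linarith)
    rw [hsθ] at hsin
    calc b = l * (b / l) := by field_simp
    _ ≤ l * Real.sin φ := by nlinarith
  have keyb3 : ∀ φ ∈ Set.Icc (π - θ) π, min b (l * Real.sin φ) = l * Real.sin φ := by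
    intro φ ⟨h1, h2⟩
    refine min_eq_right ?_
    have : Real.sin φ ≤ Real.sin θ := by
      rw [← Real.sin_pi_sub φ]
      exact Real.strictMonoOn_sin.monotoneOn ⟨by linarith, by linarith⟩
        ⟨by linarith, by linarith⟩ (by linarith)
    rw [hsθ] at this
    calc l * Real.sin φ ≤ l * (b / l) := by nlinarith
    _ = b := by field_simp
  have hcos1 : ∀ φ ∈ Set.Icc (0:ℝ) (π/2), |Real.cos φ| = Real.cos φ := by
    intro φ ⟨h1, h2⟩
    exact abs_of_nonneg (Real.cos_nonneg_of_mem_Icc ⟨by linarith, h2⟩)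
  have hcos2 : ∀ φ ∈ Set.Icc (π/2) π, |Real.cos φ| = -Real.cos φ := by
    intro φ ⟨h1, h2⟩
    exact abs_of_nonpos (Real.cos_nonpos_of_pi_div_two_le_of_le h1 (by linarith))
  set f : ℝ → ℝ := fun φ => min a (l * |Real.cos φ|) * min b (l * Real.sin φ) with hf
  have hcont : Continuous f := by
    apply Continuous.mul
    · exact continuous_const.min (continuous_const.mul Real.continuous_cos.abs)
    · exact continuous_const.min (continuous_const.mul Real.continuous_sin)
  have hi : ∀ u v : ℝ, IntervalIntegrable f volume u v :=
    fun u v => hcont.intervalIntegrable _ _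
  have hsplit : AB2 l a b = (∫ φ in (0:ℝ)..θ, f φ) + (∫ φ in θ..(π/2), f φ)
      + (∫ φ in (π/2)..(π - θ), f φ) + (∫ φ in (π - θ)..π, f φ) := by
    unfold AB2
    rw [← intervalIntegral.integral_add_adjacent_intervals (hi 0 (π/2)) (hi (π/2) π)]
    rw [← intervalIntegral.integral_add_adjacent_intervals (hi 0 θ) (hi θ (π/2))]
    rw [← intervalIntegral.integral_add_adjacent_intervals (hi (π/2) (π - θ)) (hi (π - θ) π)]
    ring
  have e1 : ∫ φ in (0:ℝ)..θ, f φ = l ^ 2 * (Real.sin θ ^ 2 / 2) := by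
    rw [intervalIntegral.integral_congr (g := fun φ => l ^ 2 * (Real.sin φ * Real.cos φ)) ?_]
    · rw [intervalIntegral.integral_const_mul, integral_sin_mul_cos']
      simp
    · intro φ hφ
      rw [Set.uIcc_of_le hθ0.le] at hφ
      simp only [hf]
      rw [hmina φ, keyb1 φ hφ, hcos1 φ ⟨hφ.1, by linarith [hφ.2]⟩]
      ring
  have e2 : ∫ φ in θ..(π/2), f φ = l * b * (1 - Real.sin θ) := by
    rw [intervalIntegral.integral_congr (g := fun φ => l * b * Real.cos φ) ?_]
    · rw [intervalIntegral.integral_const_mul, integral_cos]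
      simp
    · intro φ hφ
      rw [Set.uIcc_of_le hθ2.le] at hφ
      simp only [hf]
      rw [hmina φ, keyb2 φ ⟨hφ.1, by linarith [hφ.2]⟩, hcos1 φ ⟨by linarith [hφ.1], hφ.2⟩]
      ring
  have e3 : ∫ φ in (π/2)..(π - θ), f φ = l * b * (1 - Real.sin θ) := by
    rw [intervalIntegral.integral_congr (g := fun φ => l * b * (-Real.cos φ)) ?_]
    · rw [intervalIntegral.integral_const_mul, intervalIntegral.integral_neg, integral_cos]
      rw [Real.sin_pi_sub, Real.sin_pi_div_two]
      ring
    · intro φ hφ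
      rw [Set.uIcc_of_le (by linarith)] at hφ
      simp only [hf]
      rw [hmina φ, keyb2 φ ⟨by linarith [hφ.1], hφ.2⟩, hcos2 φ ⟨hφ.1, by linarith [hφ.2]⟩]
      ring
  have e4 : ∫ φ in (π - θ)..π, f φ = l ^ 2 * (Real.sin θ ^ 2 / 2) := by
    rw [intervalIntegral.integral_congr (g := fun φ => l ^ 2 * (-(Real.sin φ * Real.cos φ))) ?_]
    · rw [intervalIntegral.integral_const_mul, intervalIntegral.integral_neg,
        integral_sin_mul_cos']
      rw [Real.sin_pi, Real.sin_pi_sub]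
      ring
    · intro φ hφ
      rw [Set.uIcc_of_le (by linarith)] at hφ
      simp only [hf]
      rw [hmina φ, keyb3 φ hφ, hcos2 φ ⟨by linarith [hφ.1], hφ.2⟩]
      ring
  rw [hsplit, e1, e2, e3, e4, hsθ]
  field_simp
  ring

theorem stmt6 (l a b : ℝ) (hb : 0 < b) (hbl : b < l) (hla : l ≤ a) :
    P2 l a b = 1 / π * (b / a)
      + 2 / π * (l / b) * (1 - Real.sqrt (1 - b ^ 2 / l ^ 2))
      + 2 / π * (π / 2 - Real.arcsin (b / l)) := by
  have hl : 0 < l := hb.trans hbl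
  have ha : 0 < a := hl.trans_le hla
  have hπ : (0:ℝ) < π := Real.pi_pos
  rw [P2, A2_eq hl hla, B2_eq hb hbl, AB2_eq hb hbl hla]
  field_simp
  ring
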